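/- For any x ∈ ℂ with |x| = 1 and any λ ∈ [0,1], the six vectors ((1,0),(ζ^{λ/2},0)), ((i,0),(iζ^{λ/2},0)), ((0,ix),(0,iζ^{λ}x)), ((1,0),(−ζ^{λ/2},0)), ((i,0),(−iζ^{λ/2},0)), ((0,0),(0,iζ^{λ}x)) in ℂ² × ℂ² span a real vector subspace of dimension 6. (These are the tangent vectors to A₁ and A₄ at the point ((0,x),(0,ζ^λ x)), so A₁ and A₄ intersect transversally.) -/

import Mathlib

open Complex

/-- `zeta t = exp(2πit/7)`. -/
noncomputable def zeta (t : ℝ) : ℂ := Complex.exp ((2 * Real.pi * t / 7 : ℝ) * Complex.I)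

/-- For any `x ∈ ℂ` with `|x| = 1` and any `λ ∈ [0,1]`, the six vectors
`((1,0),(ζ^{λ/2},0))`, `((i,0),(iζ^{λ/2},0))`, `((0,ix),(0,iζ^λx))`,
`((1,0),(−ζ^{λ/2},0))`, `((i,0),(−iζ^{λ/2},0))`, `((0,0),(0,iζ^λx))` in `ℂ² × ℂ²`
span a real vector subspace of dimension 6.  (These are the tangent vectors to `A₁`
and `A₄` at the point `((0,x),(0,ζ^λx))`, so `A₁` and `A₄` intersect transversally.) -/
theorem stmt_12 (x : ℂ) (hx : ‖x‖ = 1) (l : ℝ) (hl : l ∈ Set.Icc (0:ℝ) 1) :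
    Module.finrank ℝ (Submodule.span ℝ
      ({(((1 : ℂ), (0 : ℂ)), (zeta (l / 2), (0 : ℂ))),
        ((Complex.I, (0 : ℂ)), (Complex.I * zeta (l / 2), (0 : ℂ))),
        (((0 : ℂ), Complex.I * x), ((0 : ℂ), Complex.I * zeta l * x)),
        (((1 : ℂ), (0 : ℂ)), (-zeta (l / 2), (0 : ℂ))),
        ((Complex.I, (0 : ℂ)), (-(Complex.I * zeta (l / 2)), (0 : ℂ))),
        (((0 : ℂ), (0 : ℂ)), ((0 : ℂ), Complex.I * zeta l * x))} :
        Set ((ℂ × ℂ) × (ℂ × ℂ)))) = 6 := by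
  have hz : zeta (l/2) ≠ 0 := Complex.exp_ne_zero _
  have hx0 : x ≠ 0 := by
    intro h; rw [h] at hx; simp at hx
  have hIx : Complex.I * x ≠ 0 := mul_ne_zero Complex.I_ne_zero hx0
  have hw : Complex.I * zeta l * x ≠ 0 :=
    mul_ne_zero (mul_ne_zero Complex.I_ne_zero (Complex.exp_ne_zero _)) hx0
  set z : ℂ := zeta (l/2) with hzdef
  set w : ℂ := Complex.I * zeta l * x with hwdef
  set v : Fin 6 → (ℂ × ℂ) × (ℂ × ℂ) :=
    ![(((1:ℂ),(0:ℂ)),((0:ℂ),(0:ℂ))),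
      ((Complex.I,(0:ℂ)),((0:ℂ),(0:ℂ))),
      (((0:ℂ), Complex.I * x),((0:ℂ),(0:ℂ))),
      (((0:ℂ),(0:ℂ)),(z,(0:ℂ))),
      (((0:ℂ),(0:ℂ)),(Complex.I * z,(0:ℂ))),
      (((0:ℂ),(0:ℂ)),((0:ℂ), w))] with hv
  set S : Set ((ℂ × ℂ) × (ℂ × ℂ)) :=
      {(((1 : ℂ), (0 : ℂ)), (z, (0 : ℂ))),
        ((Complex.I, (0 : ℂ)), (Complex.I * z, (0 : ℂ))),
        (((0 : ℂ), Complex.I * x), ((0 : ℂ), w)),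
        (((1 : ℂ), (0 : ℂ)), (-z, (0 : ℂ))),
        ((Complex.I, (0 : ℂ)), (-(Complex.I * z), (0 : ℂ))),
        (((0 : ℂ), (0 : ℂ)), ((0 : ℂ), w))} with hS
  have hv0 : v 0 = (((1:ℂ),(0:ℂ)),((0:ℂ),(0:ℂ))) := rfl
  have hv1 : v 1 = ((Complex.I,(0:ℂ)),((0:ℂ),(0:ℂ))) := rfl
  have hv2 : v 2 = (((0:ℂ), Complex.I * x),((0:ℂ),(0:ℂ))) := rfl
  have hv3 : v 3 = (((0:ℂ),(0:ℂ)),(z,(0:ℂ))) := rfl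
  have hv4 : v 4 = (((0:ℂ),(0:ℂ)),(Complex.I * z,(0:ℂ))) := rfl
  have hv5 : v 5 = (((0:ℂ),(0:ℂ)),((0:ℂ), w)) := rfl
  have hspan : Submodule.span ℝ S = Submodule.span ℝ (Set.range v) := by
    apply le_antisymm
    · rw [Submodule.span_le]
      intro p hp
      have mem : ∀ i, v i ∈ Submodule.span ℝ (Set.range v) :=
        fun i => Submodule.subset_span ⟨i, rfl⟩
      simp only [hS, Set.mem_insert_iff, Set.mem_singleton_iff] at hp
      rcases hp with rfl | rfl | rfl | rfl | rfl | rfl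
      · have : (((1:ℂ),(0:ℂ)),(z,(0:ℂ))) = v 0 + v 3 := by
          rw [hv0, hv3]; ext <;> simp
        rw [this]; exact Submodule.add_mem _ (mem 0) (mem 3)
      · have : ((Complex.I,(0:ℂ)),(Complex.I * z,(0:ℂ))) = v 1 + v 4 := by
          rw [hv1, hv4]; ext <;> simp
        rw [this]; exact Submodule.add_mem _ (mem 1) (mem 4)
      · have : (((0:ℂ), Complex.I * x),((0:ℂ), w)) = v 2 + v 5 := by
          rw [hv2, hv5]; ext <;> simp
        rw [this]; exact Submodule.add_mem _ (mem 2) (mem 5)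
      · have : (((1:ℂ),(0:ℂ)),(-z,(0:ℂ))) = v 0 - v 3 := by
          rw [hv0, hv3]; ext <;> simp
        rw [this]; exact Submodule.sub_mem _ (mem 0) (mem 3)
      · have : ((Complex.I,(0:ℂ)),(-(Complex.I * z),(0:ℂ))) = v 1 - v 4 := by
          rw [hv1, hv4]; ext <;> simp
        rw [this]; exact Submodule.sub_mem _ (mem 1) (mem 4)
      · exact mem 5
    · rw [Submodule.span_le]
      rintro p ⟨i, rfl⟩
      have m1 : (((1:ℂ),(0:ℂ)),(z,(0:ℂ))) ∈ Submodule.span ℝ S :=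
        Submodule.subset_span (by simp [hS])
      have m2 : ((Complex.I,(0:ℂ)),(Complex.I * z,(0:ℂ))) ∈ Submodule.span ℝ S :=
        Submodule.subset_span (by simp [hS])
      have m3 : (((0:ℂ), Complex.I * x),((0:ℂ), w)) ∈ Submodule.span ℝ S :=
        Submodule.subset_span (by simp [hS])
      have m4 : (((1:ℂ),(0:ℂ)),(-z,(0:ℂ))) ∈ Submodule.span ℝ S :=
        Submodule.subset_span (by simp [hS])
      have m5 : ((Complex.I,(0:ℂ)),(-(Complex.I * z),(0:ℂ))) ∈ Submodule.span ℝ S :=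
        Submodule.subset_span (by simp [hS])
      have m6 : (((0:ℂ),(0:ℂ)),((0:ℂ), w)) ∈ Submodule.span ℝ S :=
        Submodule.subset_span (by simp [hS])
      have k0 : v 0 ∈ Submodule.span ℝ S := by
        have : v 0 = (1/2:ℝ) • ((((1:ℂ),(0:ℂ)),(z,(0:ℂ))) + (((1:ℂ),(0:ℂ)),(-z,(0:ℂ)))) := by
          rw [hv0]; ext <;> simp [Complex.real_smul] <;> push_cast <;> ring
        rw [this]; exact Submodule.smul_mem _ _ (Submodule.add_mem _ m1 m4)
      have k1 : v 1 ∈ Submodule.span ℝ S := by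
        have : v 1 = (1/2:ℝ) • (((Complex.I,(0:ℂ)),(Complex.I * z,(0:ℂ)))
            + ((Complex.I,(0:ℂ)),(-(Complex.I * z),(0:ℂ)))) := by
          rw [hv1]; ext <;> simp [Complex.real_smul] <;> push_cast <;> ring
        rw [this]; exact Submodule.smul_mem _ _ (Submodule.add_mem _ m2 m5)
      have k2 : v 2 ∈ Submodule.span ℝ S := by
        have : v 2 = (((0:ℂ), Complex.I * x),((0:ℂ), w)) - (((0:ℂ),(0:ℂ)),((0:ℂ), w)) := by
          rw [hv2]; ext <;> simp
        rw [this]; exact Submodule.sub_mem _ m3 m6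
      have k3 : v 3 ∈ Submodule.span ℝ S := by
        have : v 3 = (1/2:ℝ) • ((((1:ℂ),(0:ℂ)),(z,(0:ℂ))) - (((1:ℂ),(0:ℂ)),(-z,(0:ℂ)))) := by
          rw [hv3]; ext <;> simp [Complex.real_smul] <;> push_cast <;> ring
        rw [this]; exact Submodule.smul_mem _ _ (Submodule.sub_mem _ m1 m4)
      have k4 : v 4 ∈ Submodule.span ℝ S := by
        have : v 4 = (1/2:ℝ) • (((Complex.I,(0:ℂ)),(Complex.I * z,(0:ℂ)))
            - ((Complex.I,(0:ℂ)),(-(Complex.I * z),(0:ℂ)))) := by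
          rw [hv4]; ext <;> simp [Complex.real_smul] <;> push_cast <;> ring
        rw [this]; exact Submodule.smul_mem _ _ (Submodule.sub_mem _ m2 m5)
      have k5 : v 5 ∈ Submodule.span ℝ S := by rw [hv5]; exact m6
      fin_cases i
      · exact k0
      · exact k1
      · exact k2
      · exact k3
      · exact k4
      · exact k5
  have hli : LinearIndependent ℝ v := by
    rw [Fintype.linearIndependent_iff]
    intro g hg
    rw [Fin.sum_univ_six] at hg
    have hg2 : g 0 • ((((1:ℂ),(0:ℂ)),((0:ℂ),(0:ℂ))) : (ℂ × ℂ) × (ℂ × ℂ))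
        + g 1 • ((Complex.I,(0:ℂ)),((0:ℂ),(0:ℂ)))
        + g 2 • (((0:ℂ), Complex.I * x),((0:ℂ),(0:ℂ)))
        + g 3 • (((0:ℂ),(0:ℂ)),(z,(0:ℂ)))
        + g 4 • (((0:ℂ),(0:ℂ)),(Complex.I * z,(0:ℂ)))
        + g 5 • (((0:ℂ),(0:ℂ)),((0:ℂ), w)) = 0 := hg
    clear hg
    simp only [Prod.smul_mk, Prod.mk_add_mk, Prod.mk.injEq, Prod.mk_eq_zero,
      Complex.real_smul, smul_zero] at hg2
    obtain ⟨⟨h1, h2⟩, h3, h4⟩ := hg2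
    have e1 : (g 0 : ℂ) + (g 1 : ℂ) * Complex.I = 0 := by
      rw [← h1]; ring
    have e2 : (g 2 : ℂ) * (Complex.I * x) = 0 := by
      rw [← h2]; ring
    have e3 : ((g 3 : ℂ) + (g 4 : ℂ) * Complex.I) * z = 0 := by
      rw [← h3]; ring
    have e4 : (g 5 : ℂ) * w = 0 := by
      rw [← h4]; ring
    rw [Complex.ext_iff] at e1
    simp at e1
    have e3' := (mul_eq_zero.1 e3).resolve_right hz
    rw [Complex.ext_iff] at e3'
    simp at e3'
    have g2 : g 2 = 0 := by
      have := (mul_eq_zero.1 e2).resolve_right hIx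
      exact_mod_cast this
    have g5 : g 5 = 0 := by
      have := (mul_eq_zero.1 e4).resolve_right hw
      exact_mod_cast this
    intro i
    fin_cases i
    · exact e1.1
    · exact e1.2
    · exact g2
    · exact e3'.1
    · exact e3'.2
    · exact g5
  rw [hspan, finrank_span_eq_card hli, Fintype.card_fin]
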